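/- Let A = ℝ[x] and B = ℂ[x], with K = ℝ(x) and L = ℂ(x) their fraction fields, and let ℍ = {z ∈ ℂ : Im(z) > 0} be the open upper half-plane. Then the group homomorphism from the free abelian group on the set ℍ to the polar group Π(A) = L*/(B*·K*), determined by sending the generator corresponding to z ∈ ℍ to the class of x − z, is a group isomorphism; in particular Π(ℝ[x]) is free abelian with basis {[x − z] : z ∈ ℍ}. -/

import Mathlib

open Polynomial

/-- `ℝ[x]`, realized as the subring of `B = ℂ[x]` of polynomials with real
coefficients (the image of `ℝ[x]` under coefficientwise inclusion `ℝ → ℂ`). -/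
noncomputable def realPolySubring : Subring (Polynomial ℂ) :=
  (Polynomial.mapRingHom (algebraMap ℝ ℂ)).range

/-- The subgroup `B* · K*` of `L* = ℂ(x)*`, where `B = ℂ[x]` and `K = ℝ(x)`. -/
noncomputable def polarN : Subgroup (FractionRing (Polynomial ℂ))ˣ :=
  Subgroup.closure {u : (FractionRing (Polynomial ℂ))ˣ |
    (∃ b : (Polynomial ℂ)ˣ,
      (u : FractionRing (Polynomial ℂ)) =
        algebraMap (Polynomial ℂ) (FractionRing (Polynomial ℂ)) (b : Polynomial ℂ)) ∨
    (∃ a : realPolySubring,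
      (u : FractionRing (Polynomial ℂ)) =
        algebraMap (Polynomial ℂ) (FractionRing (Polynomial ℂ)) (a : Polynomial ℂ))}

/-- The class `[f] ∈ Π(ℝ[x]) = L*/(B*·K*)` of a nonzero `f ∈ ℂ[x]`. -/
noncomputable def polarCls (f : Polynomial ℂ) (hf : f ≠ 0) :
    (FractionRing (Polynomial ℂ))ˣ ⧸ polarN :=
  QuotientGroup.mk (Units.mk0
    (algebraMap (Polynomial ℂ) (FractionRing (Polynomial ℂ)) f)
    (by rwa [Ne, IsFractionRing.to_map_eq_zero_iff]))

namespace PolarAux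

abbrev Lf := FractionRing (Polynomial ℂ)

noncomputable abbrev ι : Polynomial ℂ →+* Lf := algebraMap (Polynomial ℂ) Lf

/-- the unit of `L = ℂ(x)` attached to a nonzero polynomial -/
noncomputable def unitOf (f : Polynomial ℂ) (hf : f ≠ 0) : Lfˣ :=
  Units.mk0 (ι f) (by rwa [Ne, IsFractionRing.to_map_eq_zero_iff])

@[simp] lemma unitOf_val (f : Polynomial ℂ) (hf : f ≠ 0) : (unitOf f hf : Lf) = ι f := rfl

lemma polarCls_eq (f : Polynomial ℂ) (hf : f ≠ 0) :
    polarCls f hf = QuotientGroup.mk (unitOf f hf) := rfl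

lemma mk_mul' (u v : Lfˣ) :
    (QuotientGroup.mk (u * v) : Lfˣ ⧸ polarN) = QuotientGroup.mk u * QuotientGroup.mk v := rfl

lemma mk_inv' (u : Lfˣ) :
    (QuotientGroup.mk u⁻¹ : Lfˣ ⧸ polarN) = (QuotientGroup.mk u)⁻¹ := rfl

lemma unitOf_mul {f g : Polynomial ℂ} (hf : f ≠ 0) (hg : g ≠ 0) (hfg : f * g ≠ 0) :
    unitOf (f * g) hfg = unitOf f hf * unitOf g hg :=
  Units.ext (map_mul ι f g)

abbrev UH := {z : ℂ // 0 < z.im}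

noncomputable def ΦU : FreeAbelianGroup UH →+ Additive Lfˣ :=
  FreeAbelianGroup.lift fun z => Additive.ofMul (unitOf (X - C z.1) (X_sub_C_ne_zero z.1))

noncomputable def φ0 : Multiplicative (FreeAbelianGroup UH) →* (Lfˣ ⧸ polarN) :=
  (QuotientGroup.mk' polarN).comp (AddMonoidHom.toMultiplicativeLeft ΦU)

lemma φ0_apply (a : FreeAbelianGroup UH) :
    φ0 (Multiplicative.ofAdd a) = QuotientGroup.mk (ΦU a).toMul := rfl

lemma φ0_of (z : UH) :
    φ0 (Multiplicative.ofAdd (FreeAbelianGroup.of z)) =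
      polarCls (X - C z.1) (X_sub_C_ne_zero z.1) := by
  rw [φ0_apply, polarCls_eq]
  congr 1
  rw [ΦU, FreeAbelianGroup.lift_apply_of]
  rfl

lemma mem_polarN_of_isUnit {f : Polynomial ℂ} (h : IsUnit f) (hf : f ≠ 0) :
    unitOf f hf ∈ polarN :=
  Subgroup.subset_closure (Or.inl ⟨h.unit, by simp [unitOf]⟩)

lemma mem_polarN_of_real {p : Polynomial ℂ} (hp : p ≠ 0) (f : Polynomial ℝ)
    (h : p = f.map (algebraMap ℝ ℂ)) : unitOf p hp ∈ polarN :=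
  Subgroup.subset_closure (Or.inr ⟨⟨p, ⟨f, by simp [Polynomial.coe_mapRingHom, h]⟩⟩, rfl⟩)

/-- the subgroup of units of the form `c · f / g` with `c` a constant
and `f, g` nonzero real polynomials -/
noncomputable def Tsub : Subgroup Lfˣ where
  carrier := {u | ∃ (c : ℂ) (f g : Polynomial ℝ), c ≠ 0 ∧ f ≠ 0 ∧ g ≠ 0 ∧
    (u : Lf) * ι (g.map (algebraMap ℝ ℂ)) = ι (C c * f.map (algebraMap ℝ ℂ))}
  one_mem' := ⟨1, 1, 1, one_ne_zero, one_ne_zero, one_ne_zero, by simp⟩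
  mul_mem' := by
    rintro u v ⟨c, f, g, hc, hf, hg, h⟩ ⟨c', f', g', hc', hf', hg', h'⟩
    refine ⟨c * c', f * f', g * g', mul_ne_zero hc hc', mul_ne_zero hf hf',
      mul_ne_zero hg hg', ?_⟩
    simp only [Polynomial.map_mul, map_mul, C_mul, Units.val_mul] at *
    linear_combination ((v : Lf) * ι (g'.map (algebraMap ℝ ℂ))) * h +
      (ι (C c) * ι (f.map (algebraMap ℝ ℂ))) * h'
  inv_mem' := by
    rintro u ⟨c, f, g, hc, hf, hg, h⟩
    refine ⟨c⁻¹, g, f, inv_ne_zero hc, hg, hf, ?_⟩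
    have h' : (u : Lf) * ι (g.map (algebraMap ℝ ℂ)) = ι (C c) * ι (f.map (algebraMap ℝ ℂ)) := by
      rw [h, map_mul]
    have hc' : ι (C c⁻¹) * ι (C c) = 1 := by
      rw [← map_mul, ← C_mul, inv_mul_cancel₀ hc, C_1, map_one]
    calc ((u⁻¹ : Lfˣ) : Lf) * ι (f.map (algebraMap ℝ ℂ))
        = (↑u)⁻¹ * ι (f.map (algebraMap ℝ ℂ)) := by rw [Units.val_inv_eq_inv_val]
      _ = (↑u)⁻¹ * (ι (C c⁻¹) * (ι (C c) * ι (f.map (algebraMap ℝ ℂ)))) := by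
          rw [← mul_assoc (ι (C c⁻¹)), hc', one_mul]
      _ = (↑u)⁻¹ * (ι (C c⁻¹) * ((u : Lf) * ι (g.map (algebraMap ℝ ℂ)))) := by rw [← h']
      _ = ι (C c⁻¹) * ι (g.map (algebraMap ℝ ℂ)) * ((↑u)⁻¹ * ↑u) := by ring
      _ = ι (C c⁻¹ * g.map (algebraMap ℝ ℂ)) := by
          rw [inv_mul_cancel₀ (Units.ne_zero u), mul_one, ← map_mul]

lemma polarN_le_Tsub : polarN ≤ Tsub := by
  rw [polarN, Subgroup.closure_le]
  rintro u (⟨b, hb⟩ | ⟨a, ha⟩)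
  · obtain ⟨c, hcu, hCc⟩ := Polynomial.isUnit_iff.mp b.isUnit
    refine ⟨c, 1, 1, hcu.ne_zero, one_ne_zero, one_ne_zero, ?_⟩
    simp only [Polynomial.map_one, map_one, mul_one]
    rw [hb, ← hCc]
  · obtain ⟨f, hf⟩ := a.2
    have ha0 : (a : Polynomial ℂ) ≠ 0 := by
      intro h0
      apply Units.ne_zero u
      rw [ha, h0, map_zero]
    have hf' : (a : Polynomial ℂ) = f.map (algebraMap ℝ ℂ) := by
      rw [← hf]; rfl
    have hf0 : f ≠ 0 := by
      intro h0; apply ha0; rw [hf', h0, Polynomial.map_zero]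
    refine ⟨1, f, 1, one_ne_zero, hf0, one_ne_zero, ?_⟩
    simp only [Polynomial.map_one, map_one, mul_one, C_1, one_mul]
    rw [ha, hf']

lemma rm_conj (f : Polynomial ℝ) (z : ℂ) :
    rootMultiplicity ((starRingEnd ℂ) z) (f.map (algebraMap ℝ ℂ)) =
      rootMultiplicity z (f.map (algebraMap ℝ ℂ)) := by
  classical
  set p := f.map (algebraMap ℝ ℂ) with hp
  have hfix : p.map (starRingEnd ℂ) = p := by
    rw [hp, Polynomial.map_map]
    congr 1
    ext r
    simp [Complex.conj_ofReal]
  have hsplit : p.Splits := IsAlgClosed.splits p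
  calc rootMultiplicity ((starRingEnd ℂ) z) p
      = p.roots.count ((starRingEnd ℂ) z) := (count_roots p).symm
    _ = (p.map (starRingEnd ℂ)).roots.count ((starRingEnd ℂ) z) := by rw [hfix]
    _ = (p.roots.map (starRingEnd ℂ)).count ((starRingEnd ℂ) z) := by
        rw [hsplit.roots_map _]
    _ = p.roots.count z := Multiset.count_map_eq_count' _ _ (RingHom.injective _) z
    _ = rootMultiplicity z p := count_roots p

noncomputable def coeffAt (z : ℂ) : FreeAbelianGroup UH →+ ℤ :=
  FreeAbelianGroup.lift fun w => if z = (w : ℂ) then 1 else 0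

lemma coeffAt_of (z : ℂ) (w : UH) :
    coeffAt z (FreeAbelianGroup.of w) = if z = (w : ℂ) then 1 else 0 :=
  FreeAbelianGroup.lift_apply_of _ _

lemma coeffAt_eq_zero_of_im_nonpos {z : ℂ} (hz : z.im ≤ 0) (a : FreeAbelianGroup UH) :
    coeffAt z a = 0 := by
  induction a using FreeAbelianGroup.induction_on with
  | zero => simp
  | of w =>
    rw [coeffAt_of, if_neg]
    intro h
    rw [h] at hz
    exact absurd w.2 (not_lt.mpr hz)
  | neg w ih => rw [map_neg, ih, neg_zero]
  | add x y ihx ihy => rw [map_add, ihx, ihy, add_zero]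

lemma rootMultiplicity_one' (z : ℂ) : rootMultiplicity z (1 : Polynomial ℂ) = 0 := by
  rw [← C_1, rootMultiplicity_C]

lemma key (a : FreeAbelianGroup UH) :
    ∃ P N : Polynomial ℂ, P ≠ 0 ∧ N ≠ 0 ∧
      ((ΦU a).toMul : Lf) * ι N = ι P ∧
      ∀ z : ℂ, (rootMultiplicity z P : ℤ) - rootMultiplicity z N = coeffAt z a := by
  classical
  induction a using FreeAbelianGroup.induction_on with
  | zero =>
    refine ⟨1, 1, one_ne_zero, one_ne_zero, ?_, ?_⟩
    · simp
    · intro z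
      simp [rootMultiplicity_one']
  | of w =>
    refine ⟨X - C w.1, 1, X_sub_C_ne_zero w.1, one_ne_zero, ?_, ?_⟩
    · rw [ΦU, FreeAbelianGroup.lift_apply_of]
      simp
    · intro z
      rw [coeffAt_of, rootMultiplicity_one', rootMultiplicity_X_sub_C]
      split_ifs <;> simp
  | neg w ih =>
    obtain ⟨P, N, hP, hN, hPN, hrm⟩ := ih
    refine ⟨N, P, hN, hP, ?_, ?_⟩
    · rw [map_neg]
      set u := (ΦU (FreeAbelianGroup.of w)).toMul
      have : (Additive.toMul (-Additive.ofMul u) : Lfˣ) = u⁻¹ := rfl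
      show ((u⁻¹ : Lfˣ) : Lf) * ι P = ι N
      rw [← hPN, Units.val_inv_eq_inv_val]
      field_simp
    · intro z
      rw [map_neg, ← hrm z]
      ring
  | add x y ihx ihy =>
    obtain ⟨P, N, hP, hN, hPN, hrm⟩ := ihx
    obtain ⟨P', N', hP', hN', hPN', hrm'⟩ := ihy
    refine ⟨P * P', N * N', mul_ne_zero hP hP', mul_ne_zero hN hN', ?_, ?_⟩
    · rw [map_add]
      show (((ΦU x).toMul * (ΦU y).toMul : Lfˣ) : Lf) * ι (N * N') = ι (P * P')
      rw [Units.val_mul, map_mul, map_mul]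
      linear_combination ((ΦU y).toMul : Lf) * ι N' * hPN + ι P * hPN'
    · intro z
      rw [map_add, ← hrm z, ← hrm' z,
        rootMultiplicity_mul (mul_ne_zero hP hP'),
        rootMultiplicity_mul (mul_ne_zero hN hN')]
      push_cast
      ring

lemma toFinsupp_eq_coeffAt (a : FreeAbelianGroup UH) (w : UH) :
    FreeAbelianGroup.toFinsupp a w = coeffAt (w : ℂ) a := by
  induction a using FreeAbelianGroup.induction_on with
  | zero => simp
  | of x =>
    rw [FreeAbelianGroup.toFinsupp_of, coeffAt_of, Finsupp.single_apply]
    by_cases h : x = w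
    · subst h; simp
    · rw [if_neg h, if_neg]
      intro hc
      exact h (Subtype.ext hc.symm)
  | neg x ih => rw [map_neg, map_neg, Finsupp.neg_apply, ih]
  | add x y ihx ihy => rw [map_add, map_add, Finsupp.add_apply, ihx, ihy]

lemma inj : Function.Injective φ0 := by
  rw [injective_iff_map_eq_one]
  intro x hx
  set a := Multiplicative.toAdd x with ha
  have hx' : φ0 (Multiplicative.ofAdd a) = 1 := hx
  rw [φ0_apply, QuotientGroup.eq_one_iff] at hx'
  obtain ⟨c, f, g, hc, hf, hg, hEq⟩ := polarN_le_Tsub hx'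
  obtain ⟨P, N, hP, hN, hPN, hrm⟩ := key a
  set F := f.map (algebraMap ℝ ℂ) with hF
  set G := g.map (algebraMap ℝ ℂ) with hG
  have hFne : F ≠ 0 := (Polynomial.map_ne_zero_iff (algebraMap ℝ ℂ).injective).mpr hf
  have hGne : G ≠ 0 := (Polynomial.map_ne_zero_iff (algebraMap ℝ ℂ).injective).mpr hg
  have hCc : (C c : Polynomial ℂ) ≠ 0 := C_ne_zero.mpr hc
  have hpoly : P * G = C c * F * N := by
    apply IsFractionRing.injective (Polynomial ℂ) Lf
    rw [map_mul, map_mul, ← hPN, ← hEq]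
    ring
  have E : ∀ t : ℂ, (rootMultiplicity t P : ℤ) + rootMultiplicity t G =
      rootMultiplicity t F + rootMultiplicity t N := by
    intro t
    have h1 : rootMultiplicity t (P * G) = rootMultiplicity t (C c * F * N) := by
      rw [hpoly]
    rw [rootMultiplicity_mul (mul_ne_zero hP hGne),
      rootMultiplicity_mul (mul_ne_zero (mul_ne_zero hCc hFne) hN),
      rootMultiplicity_mul (mul_ne_zero hCc hFne), rootMultiplicity_C] at h1
    omega
  have ha0 : ∀ w : UH, coeffAt (w : ℂ) a = 0 := by
    intro w
    set z := (w : ℂ)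
    set zb := (starRingEnd ℂ) z with hzb
    have hzbim : zb.im ≤ 0 := by
      rw [hzb]
      simp only [Complex.conj_im]
      linarith [w.2]
    have e1 := E z
    have e2 := E zb
    have sG : rootMultiplicity zb G = rootMultiplicity z G := rm_conj g z
    have sF : rootMultiplicity zb F = rootMultiplicity z F := rm_conj f z
    have c0 : (rootMultiplicity zb P : ℤ) - rootMultiplicity zb N = 0 := by
      rw [hrm zb, coeffAt_eq_zero_of_im_nonpos hzbim]
    rw [← hrm z]
    omega
  have hfs : FreeAbelianGroup.toFinsupp a = 0 := by
    ext w
    rw [toFinsupp_eq_coeffAt, ha0 w, Finsupp.coe_zero, Pi.zero_apply]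
  have ha' : a = 0 := by
    have := congrArg (FreeAbelianGroup.equivFinsupp UH).symm
      (show FreeAbelianGroup.equivFinsupp UH a = 0 from hfs)
    simpa using this
  rw [ha] at ha'
  exact Multiplicative.toAdd.injective (by simpa using ha')

lemma cls_linear (z : ℂ) :
    (QuotientGroup.mk (unitOf (X - C z) (X_sub_C_ne_zero z)) : Lfˣ ⧸ polarN) ∈ φ0.range := by
  rcases lt_trichotomy z.im 0 with hlt | heq | hgt
  · -- lower half-plane: use conjugate
    set w := (starRingEnd ℂ) z with hw
    have hwim : 0 < w.im := by
      rw [hw]; simp only [Complex.conj_im]; linarith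
    have h1 : ((2 * z.re : ℝ) : ℂ) = z + w := by
      rw [hw, Complex.add_conj]
    have h2 : ((z.re ^ 2 + z.im ^ 2 : ℝ) : ℂ) = z * w := by
      rw [hw, Complex.mul_conj, Complex.normSq_apply]
      push_cast
      ring
    have hreal : (X - C z) * (X - C w) =
        (X ^ 2 - C (2 * z.re) * X + C (z.re ^ 2 + z.im ^ 2)).map (algebraMap ℝ ℂ) := by
      simp only [Polynomial.map_add, Polynomial.map_sub, Polynomial.map_mul,
        Polynomial.map_pow, Polynomial.map_X, Polynomial.map_C]
      rw [show (algebraMap ℝ ℂ) (2 * z.re) = z + w from h1,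
        show (algebraMap ℝ ℂ) (z.re ^ 2 + z.im ^ 2) = z * w from h2, C_add, C_mul]
      ring
    have hprod : (X - C z) * (X - C w) ≠ 0 :=
      mul_ne_zero (X_sub_C_ne_zero z) (X_sub_C_ne_zero w)
    have hmem : unitOf _ hprod ∈ polarN := mem_polarN_of_real hprod _ hreal
    have hsplit : unitOf _ hprod = unitOf (X - C z) (X_sub_C_ne_zero z) *
        unitOf (X - C w) (X_sub_C_ne_zero w) :=
      unitOf_mul (X_sub_C_ne_zero z) (X_sub_C_ne_zero w) hprod
    have hone : (QuotientGroup.mk (unitOf (X - C z) (X_sub_C_ne_zero z)) : Lfˣ ⧸ polarN) *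
        QuotientGroup.mk (unitOf (X - C w) (X_sub_C_ne_zero w)) = 1 := by
      have h := (QuotientGroup.eq_one_iff _).mpr hmem
      rw [hsplit] at h
      exact h
    have hmemw : (QuotientGroup.mk (unitOf (X - C w) (X_sub_C_ne_zero w)) : Lfˣ ⧸ polarN)
        ∈ φ0.range := by
      refine ⟨Multiplicative.ofAdd (FreeAbelianGroup.of ⟨w, hwim⟩), ?_⟩
      rw [φ0_of, polarCls_eq]
    have : (QuotientGroup.mk (unitOf (X - C z) (X_sub_C_ne_zero z)) : Lfˣ ⧸ polarN) =
        (QuotientGroup.mk (unitOf (X - C w) (X_sub_C_ne_zero w)) : Lfˣ ⧸ polarN)⁻¹ :=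
      eq_inv_of_mul_eq_one_left hone
    rw [this]
    exact inv_mem hmemw
  · -- real axis
    have hz : z = ((z.re : ℝ) : ℂ) := by
      apply Complex.ext
      · simp
      · simp [← heq]
    have hreal : X - C z = (X - C z.re).map (algebraMap ℝ ℂ) := by
      simp only [Polynomial.map_sub, Polynomial.map_X, Polynomial.map_C]
      rw [show (algebraMap ℝ ℂ) z.re = z from hz.symm]
    have hmem : unitOf (X - C z) (X_sub_C_ne_zero z) ∈ polarN :=
      mem_polarN_of_real _ _ hreal
    refine ⟨1, ?_⟩
    rw [map_one]
    exact ((QuotientGroup.eq_one_iff _).mpr hmem).symm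
  · exact ⟨Multiplicative.ofAdd (FreeAbelianGroup.of ⟨z, hgt⟩), by rw [φ0_of, polarCls_eq]⟩

lemma cls_mem (f : Polynomial ℂ) (hf : f ≠ 0) :
    (QuotientGroup.mk (unitOf f hf) : Lfˣ ⧸ polarN) ∈ φ0.range := by
  classical
  have hsplits : f.Splits := IsAlgClosed.splits f
  have hfact := hsplits.eq_prod_roots
  have claim : ∀ (m : Multiset ℂ) (h : (m.map fun a => X - C a).prod ≠ 0),
      (QuotientGroup.mk (unitOf _ h) : Lfˣ ⧸ polarN) ∈ φ0.range := by
    intro m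
    induction m using Multiset.induction_on with
    | empty =>
      intro h
      have h1 : unitOf _ h = 1 := Units.ext (by simp)
      exact ⟨1, by rw [map_one, h1]; rfl⟩
    | cons a s ih =>
      intro h
      have hcons : ((a ::ₘ s).map fun a => X - C a).prod =
          (X - C a) * (s.map fun a => X - C a).prod := by
        rw [Multiset.map_cons, Multiset.prod_cons]
      have hs : (s.map fun a => X - C a).prod ≠ 0 := by
        intro h0
        apply h
        rw [hcons, h0, mul_zero]
      have h1 : unitOf _ h = unitOf (X - C a) (X_sub_C_ne_zero a) * unitOf _ hs :=
        Units.ext (by rw [Units.val_mul, unitOf_val, unitOf_val, unitOf_val, hcons, map_mul])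
      rw [h1, mk_mul']
      exact mul_mem (cls_linear a) (ih hs)
  have hlead : f.leadingCoeff ≠ 0 := leadingCoeff_ne_zero.mpr hf
  have hCl : (C f.leadingCoeff : Polynomial ℂ) ≠ 0 := C_ne_zero.mpr hlead
  have hprod : ((f.roots.map fun a => X - C a).prod) ≠ 0 := by
    intro h0
    apply hf
    rw [hfact, h0, mul_zero]
  have h1 : unitOf f hf = unitOf (C f.leadingCoeff) hCl * unitOf _ hprod :=
    Units.ext (by
      rw [Units.val_mul, unitOf_val, unitOf_val, unitOf_val, ← map_mul]
      exact congrArg ι hfact)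
  rw [h1, mk_mul']
  refine mul_mem ?_ (claim _ hprod)
  rw [(QuotientGroup.eq_one_iff _).mpr
    (mem_polarN_of_isUnit (isUnit_C.mpr (isUnit_iff_ne_zero.mpr hlead)) hCl)]
  exact one_mem _

lemma surj : Function.Surjective φ0 := by
  intro q
  obtain ⟨u, rfl⟩ := QuotientGroup.mk_surjective q
  obtain ⟨p, d, hd, hval⟩ := IsFractionRing.div_surjective (A := Polynomial ℂ) (u : Lf)
  have hd0 : d ≠ 0 := nonZeroDivisors.ne_zero hd
  have hp0 : p ≠ 0 := by
    intro h0
    apply Units.ne_zero u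
    rw [← hval, h0, map_zero, zero_div]
  have hu : u = unitOf p hp0 * (unitOf d hd0)⁻¹ := Units.ext (by
    rw [Units.val_mul, Units.val_inv_eq_inv_val, unitOf_val, unitOf_val, ← div_eq_mul_inv, hval])
  rw [hu, mk_mul', mk_inv']
  exact mul_mem (cls_mem p hp0) (inv_mem (cls_mem d hd0))

end PolarAux

/-- Let `A = ℝ[x] ⊆ B = ℂ[x]`, `K = ℝ(x)`, `L = ℂ(x)`, and let
`ℍ = {z ∈ ℂ : Im z > 0}`.  The group homomorphism from the free abelian group on `ℍ`
to `Π(A) = L*/(B*·K*)` determined by sending the generator at `z ∈ ℍ` to the class of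
`x − z` is an isomorphism; in particular `Π(ℝ[x])` is free abelian with basis
`{[x − z] : z ∈ ℍ}`. -/
theorem polarGroup_real_line :
    ∃ φ : Multiplicative (FreeAbelianGroup {z : ℂ // 0 < z.im}) →*
        ((FractionRing (Polynomial ℂ))ˣ ⧸ polarN),
      (∀ z : {z : ℂ // 0 < z.im},
        φ (Multiplicative.ofAdd (FreeAbelianGroup.of z)) =
          polarCls (X - C z.1) (X_sub_C_ne_zero z.1)) ∧
      Function.Bijective φ := by
  exact ⟨PolarAux.φ0, PolarAux.φ0_of, PolarAux.inj, PolarAux.surj⟩
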